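/- arXiv:1604.04523 — 2 statements merged into one kernel-verified Lean document; each statement's English description precedes it below -/
import Mathlib

section
/- Let n ≥ 2 and 1 ≤ i < j < k ≤ n. For a pair a < b let E_{ab} be the ℤ-linear endomorphism of ℤ[S_n] defined on basis elements by E_{ab}(w) = w·t_{ab} if ℓ(w·t_{ab}) < ℓ(w) and E_{ab}(w) = 0 otherwise. Then for every w ∈ S_n, the identity E_{jk}(E_{ij}(w)) = E_{ik}(E_{jk}(w)) + E_{ij}(E_{ik}(w)) holds in ℤ[S_n]. (This is the compatibility of the extended Bruhat action with the Fomin–Kirillov relation [ij][jk] = [jk][ik] + [ik][ij].) -/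
/-- Number of inversions (the length) of a permutation of `Fin n`. -/
def invLen (n : ℕ) (w : Equiv.Perm (Fin n)) : ℕ :=
  (Finset.univ.filter (fun p : Fin n × Fin n => p.1 < p.2 ∧ w p.2 < w p.1)).card

/-- The "extended Bruhat action" operator `E_{ij}` on `ℤ[S_n]`:
on a basis element `w` it is `w * t_{ij}` if the length decreases, and `0` otherwise. -/
noncomputable def Eij (n : ℕ) (i j : Fin n) :
    MonoidAlgebra ℤ (Equiv.Perm (Fin n)) →ₗ[ℤ] MonoidAlgebra ℤ (Equiv.Perm (Fin n)) :=
  Finsupp.lift (MonoidAlgebra ℤ (Equiv.Perm (Fin n))) ℤ (Equiv.Perm (Fin n))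
    (fun w => if invLen n (w * Equiv.swap i j) < invLen n w
      then MonoidAlgebra.single (w * Equiv.swap i j) (1 : ℤ) else 0) ∘ₗ
    (MonoidAlgebra.coeffLinearEquiv ℤ).toLinearMap

open Equiv Finset

lemma invLen_lt_of (n : ℕ) (w : Equiv.Perm (Fin n)) {a b : Fin n} (hab : a < b)
    (h : w b < w a) : invLen n (w * Equiv.swap a b) < invLen n w := by
  classical
  set σ := Equiv.swap a b with hσ
  have hσσ : ∀ x, σ (σ x) = x := fun x => Equiv.swap_apply_self a b x
  have hσa : σ a = b := Equiv.swap_apply_left a b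
  have hσb : σ b = a := Equiv.swap_apply_right a b
  have hσo : ∀ x, x ≠ a → x ≠ b → σ x = x := fun x h1 h2 => Equiv.swap_apply_of_ne_of_ne h1 h2
  set v := w * σ with hv
  have hvx : ∀ x, v x = w (σ x) := fun x => rfl
  set S := Finset.univ.filter (fun p : Fin n × Fin n => p.1 < p.2 ∧ v p.2 < v p.1) with hS
  set T := Finset.univ.filter (fun p : Fin n × Fin n => p.1 < p.2 ∧ w p.2 < w p.1) with hT
  have hne : a ≠ b := ne_of_lt hab
  have habT : (a, b) ∈ T := by simp [hT, hab, h]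
  set f : Fin n × Fin n → Fin n × Fin n :=
    fun p => if σ p.1 < σ p.2 then (σ p.1, σ p.2) else p with hf
  have hmaps : ∀ p ∈ S, f p ∈ T.erase (a, b) := by
    rintro ⟨p₁, p₂⟩ hp
    simp only [hS, Finset.mem_filter, Finset.mem_univ, true_and] at hp
    obtain ⟨hlt, hinv⟩ := hp
    rw [hvx, hvx] at hinv
    simp only [hf]
    split_ifs with hcase
    · refine Finset.mem_erase.2 ⟨?_, by simp [hT, hcase, hinv]⟩
      intro hpe
      have h1 : σ p₁ = a := congrArg Prod.fst hpe
      have h2 : σ p₂ = b := congrArg Prod.snd hpe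
      have e1 : p₁ = b := by rw [← hσσ p₁, h1, hσa]
      have e2 : p₂ = a := by rw [← hσσ p₂, h2, hσb]
      rw [e1, e2] at hlt
      exact absurd hlt (not_lt.2 hab.le)
    · -- identity branch: σ p₂ < σ p₁ (p₁ ≠ p₂)
      have hne12 : p₁ ≠ p₂ := ne_of_lt hlt
      refine Finset.mem_erase.2 ⟨?_, ?_⟩
      · intro hpe
        have e1 : p₁ = a := congrArg Prod.fst hpe
        have e2 : p₂ = b := congrArg Prod.snd hpe
        rw [e1, e2, hσa, hσb] at hinv
        exact absurd (hinv.trans h) (lt_irrefl _)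
      · simp only [hT, Finset.mem_filter, Finset.mem_univ, true_and]
        refine ⟨hlt, ?_⟩
        -- cases on membership
        by_cases h1a : p₁ = a
        · by_cases h2b : p₂ = b
          · rw [h1a, h2b, hσa, hσb] at hinv
            exact absurd (hinv.trans h) (lt_irrefl _)
          · have h2a : p₂ ≠ a := by rintro rfl; exact absurd hlt (by simp [h1a])
            rw [h1a, hσa, hσo p₂ h2a h2b] at hinv
            rw [h1a]
            exact hinv.trans h
        · by_cases h1b : p₁ = b
          · -- p₁ = b, p₂ > b so p₂ ∉ {a,b}, σ p₁ = a < p₂ = σ p₂ contradicting branch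
            have hbp2 : b < p₂ := h1b ▸ hlt
            have h2b : p₂ ≠ b := ne_of_gt hbp2
            have h2a : p₂ ≠ a := ne_of_gt (hab.trans hbp2)
            exact absurd (by rw [h1b, hσb, hσo p₂ h2a h2b]; exact hab.trans hbp2) hcase
          · by_cases h2a : p₂ = a
            · -- p₁ < a, σ p₁ = p₁ < a < b = σ p₂, contradicting branch
              have h1lt : p₁ < a := h2a ▸ hlt
              exact absurd (by rw [hσo p₁ h1a h1b, h2a, hσa]; exact h1lt.trans hab) hcase
            · by_cases h2b : p₂ = b
              · rw [hσo p₁ h1a h1b, h2b, hσb] at hinv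
                rw [h2b]
                exact h.trans hinv
              · exact absurd (by rw [hσo p₁ h1a h1b, hσo p₂ h2a h2b]; exact hlt) hcase
  have hinj : Set.InjOn f S := by
    rintro ⟨p₁, p₂⟩ hp ⟨q₁, q₂⟩ hq hfeq
    simp only [Finset.mem_coe, hS, Finset.mem_filter, Finset.mem_univ, true_and] at hp hq
    simp only [hf] at hfeq
    by_cases h1 : σ p₁ < σ p₂ <;> by_cases h2 : σ q₁ < σ q₂ <;>
        simp only [if_pos, if_neg, h1, h2, if_true, if_false] at hfeq
    · have e1 : σ p₁ = σ q₁ := congrArg Prod.fst hfeq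
      have e2 : σ p₂ = σ q₂ := congrArg Prod.snd hfeq
      exact Prod.ext (σ.injective e1) (σ.injective e2)
    · exfalso
      have e1 : σ p₁ = q₁ := congrArg Prod.fst hfeq
      have e2 : σ p₂ = q₂ := congrArg Prod.snd hfeq
      rw [← e1, ← e2, hσσ, hσσ] at h2
      exact h2 hp.1
    · exfalso
      have e1 : p₁ = σ q₁ := congrArg Prod.fst hfeq
      have e2 : p₂ = σ q₂ := congrArg Prod.snd hfeq
      rw [e1, e2, hσσ, hσσ] at h1
      exact h1 hq.1
    · exact hfeq
  have hcard : S.card ≤ (T.erase (a, b)).card := Finset.card_le_card_of_injOn f hmaps hinj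
  have : (T.erase (a, b)).card < T.card := Finset.card_erase_lt_of_mem habT
  calc invLen n (w * σ) = S.card := rfl
    _ ≤ (T.erase (a,b)).card := hcard
    _ < T.card := this

lemma invLen_iff (n : ℕ) (w : Equiv.Perm (Fin n)) {a b : Fin n} (hab : a < b) :
    invLen n (w * Equiv.swap a b) < invLen n w ↔ w b < w a := by
  constructor
  · intro hlen
    by_contra hc
    have hne : w b ≠ w a := fun he => (ne_of_lt hab) (w.injective he).symm
    have h' : w a < w b := lt_of_le_of_ne (not_lt.1 hc) (Ne.symm hne)
    set v := w * Equiv.swap a b with hv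
    have hva : v a = w b := by simp [hv, Equiv.Perm.mul_apply]
    have hvb : v b = w a := by simp [hv, Equiv.Perm.mul_apply]
    have := invLen_lt_of n v hab (by rw [hva, hvb]; exact h')
    rw [hv, mul_assoc, Equiv.swap_mul_self, mul_one] at this
    exact absurd hlen (not_lt.2 this.le)
  · exact invLen_lt_of n w hab

lemma Eij_single (n : ℕ) (w : Equiv.Perm (Fin n)) {a b : Fin n} (hab : a < b) :
    Eij n a b (MonoidAlgebra.single w (1 : ℤ)) =
      if w b < w a then MonoidAlgebra.single (w * Equiv.swap a b) (1 : ℤ) else 0 := by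
  rw [Eij]
  erw [Finsupp.lift_apply]
  erw [show (MonoidAlgebra.coeffLinearEquiv ℤ) (MonoidAlgebra.single w (1 : ℤ)) = Finsupp.single w 1 from rfl]
  rw [ Finsupp.sum_single_index (by rw [zero_smul]), one_smul]
  exact if_congr (invLen_iff n w hab) rfl rfl

lemma swap_rel1 {n : ℕ} {i j k : Fin n} (hij : i ≠ j) (hjk : j ≠ k) (hik : i ≠ k) :
    Equiv.swap i j * Equiv.swap j k = Equiv.swap j k * Equiv.swap i k := by
  ext x
  simp only [Equiv.Perm.mul_apply, Equiv.swap_apply_def]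
  split_ifs <;> simp_all

lemma swap_rel2 {n : ℕ} {i j k : Fin n} (hij : i ≠ j) (hjk : j ≠ k) (hik : i ≠ k) :
    Equiv.swap i j * Equiv.swap j k = Equiv.swap i k * Equiv.swap i j := by
  ext x
  simp only [Equiv.Perm.mul_apply, Equiv.swap_apply_def]
  split_ifs <;> simp_all

/-- Compatibility of the extended Bruhat action with the Fomin–Kirillov relation
`[ij][jk] = [jk][ik] + [ik][ij]`: for every basis element `w`,
`E_{jk}(E_{ij}(w)) = E_{ik}(E_{jk}(w)) + E_{ij}(E_{ik}(w))`. -/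
theorem Eij_fk_rel1 (n : ℕ) (hn : 2 ≤ n) (i j k : Fin n) (hij : i < j) (hjk : j < k)
    (w : Equiv.Perm (Fin n)) :
    Eij n j k (Eij n i j (MonoidAlgebra.single w (1 : ℤ))) =
      Eij n i k (Eij n j k (MonoidAlgebra.single w (1 : ℤ))) +
        Eij n i j (Eij n i k (MonoidAlgebra.single w (1 : ℤ))) := by
  have hik : i < k := hij.trans hjk
  have hijne : i ≠ j := ne_of_lt hij
  have hjkne : j ≠ k := ne_of_lt hjk
  have hikne : i ≠ k := ne_of_lt hik
  -- applied values
  have e1 : (w * Equiv.swap i j) k = w k := by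
    simp [Equiv.Perm.mul_apply, Equiv.swap_apply_of_ne_of_ne hikne.symm hjkne.symm]
  have e2 : (w * Equiv.swap i j) j = w i := by simp [Equiv.Perm.mul_apply]
  have e3 : (w * Equiv.swap j k) k = w j := by simp [Equiv.Perm.mul_apply]
  have e4 : (w * Equiv.swap j k) i = w i := by
    simp [Equiv.Perm.mul_apply, Equiv.swap_apply_of_ne_of_ne hijne hikne]
  have e5 : (w * Equiv.swap i k) j = w j := by
    simp [Equiv.Perm.mul_apply, Equiv.swap_apply_of_ne_of_ne hijne.symm hjkne]
  have e6 : (w * Equiv.swap i k) i = w k := by simp [Equiv.Perm.mul_apply]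
  have Aij : ∀ v : Equiv.Perm (Fin n), Eij n i j (MonoidAlgebra.single v 1) =
      if v j < v i then MonoidAlgebra.single (v * Equiv.swap i j) (1 : ℤ) else 0 :=
    fun v => Eij_single n v hij
  have Ajk : ∀ v : Equiv.Perm (Fin n), Eij n j k (MonoidAlgebra.single v 1) =
      if v k < v j then MonoidAlgebra.single (v * Equiv.swap j k) (1 : ℤ) else 0 :=
    fun v => Eij_single n v hjk
  have Aik : ∀ v : Equiv.Perm (Fin n), Eij n i k (MonoidAlgebra.single v 1) =
      if v k < v i then MonoidAlgebra.single (v * Equiv.swap i k) (1 : ℤ) else 0 :=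
    fun v => Eij_single n v hik
  have hwij : w i ≠ w j := fun h => hijne (w.injective h)
  have hwjk : w j ≠ w k := fun h => hjkne (w.injective h)
  have hwik : w i ≠ w k := fun h => hikne (w.injective h)
  rcases lt_or_gt_of_ne hwij with h1 | h1 <;> rcases lt_or_gt_of_ne hwjk with h2 | h2 <;>
    rcases lt_or_gt_of_ne hwik with h3 | h3 <;>
    simp only [Aij, Ajk, Aik, e1, e2, e3, e4, e5, e6, map_zero, add_zero, zero_add,
      h1, h2, h3, not_lt.2 h1.le, not_lt.2 h2.le, not_lt.2 h3.le, ite_true, ite_false,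
      if_true, if_false]
  all_goals first
  | rfl
  | exact absurd (h1.trans h2) (not_lt.2 h3.le)
  | exact absurd (h2.trans h1) (not_lt.2 h3.le)
  | (rw [mul_assoc, mul_assoc, swap_rel1 hijne hjkne hikne]; done)
  | (rw [mul_assoc, mul_assoc, swap_rel2 hijne hjkne hikne]; done)
end

section
/- Let n ≥ 2, let m ≥ 0, let i_1, ..., i_m ∈ {1,...,n−1}, and set w = s_{i_1}·s_{i_2}···s_{i_m} ∈ S_n. Fix 1 ≤ k < l ≤ n. For 1 ≤ j ≤ m put t_j = s_{i_{j+1}}···s_{i_m} (so t_m is the identity), and define δ_j ∈ {−1, 0, 1} by: δ_j = 1 if (t_j(k), t_j(l)) = (i_j, i_j + 1); δ_j = −1 if (t_j(k), t_j(l)) = (i_j + 1, i_j); and δ_j = 0 otherwise. Then in the group ring ℤ[S_n] one has Σ_{j=1}^m δ_j · (s_{i_1}···s_{i_{j−1}}·s_{i_{j+1}}···s_{i_m}) = w·t_{kl} if ℓ(w·t_{kl}) < ℓ(w), and Σ_{j=1}^m δ_j · (s_{i_1}···s_{i_{j−1}}·s_{i_{j+1}}···s_{i_m}) = 0 otherwise.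 -/
open Finset Equiv


namespace SDAux

variable {n : ℕ}

def InvSet (w : Perm (Fin n)) : Finset (Fin n × Fin n) :=
  Finset.univ.filter (fun p : Fin n × Fin n => p.1 < p.2 ∧ w p.2 < w p.1)

lemma invLen_eq (w : Perm (Fin n)) : invLen n w = (InvSet w).card := rfl

lemma mem_InvSet {w : Perm (Fin n)} {p : Fin n × Fin n} :
    p ∈ InvSet w ↔ p.1 < p.2 ∧ w p.2 < w p.1 := by
  simp [InvSet]

def RSet (k l : Fin n) : Finset (Fin n × Fin n) := InvSet (Equiv.swap k l)

lemma memR_iff {k l : Fin n} (hkl : k < l) {p : Fin n × Fin n} :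
    p ∈ RSet k l ↔
      ((p.1 = k ∧ k < p.2 ∧ p.2 ≤ l) ∨ (p.2 = l ∧ k < p.1 ∧ p.1 < l)) := by
  rw [RSet, mem_InvSet]
  simp only [Equiv.swap_apply_def]
  split_ifs <;>
    (simp only [Fin.lt_def, Fin.le_def, Fin.ext_iff] at * ; omega)

/-- the involution on ordered pairs induced by the swap -/
def B (k l : Fin n) (p : Fin n × Fin n) : Fin n × Fin n :=
  if Equiv.swap k l p.1 < Equiv.swap k l p.2 then (Equiv.swap k l p.1, Equiv.swap k l p.2)
  else (Equiv.swap k l p.2, Equiv.swap k l p.1)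

lemma B_B {k l : Fin n} {p : Fin n × Fin n} (hp : p.1 < p.2) : B k l (B k l p) = p := by
  have hp' := not_lt_of_gt hp
  by_cases h : Equiv.swap k l p.1 < Equiv.swap k l p.2
  · simp [B, h, Equiv.swap_apply_self, hp]
  · simp [B, h, Equiv.swap_apply_self, hp']

lemma card_invLen_mul_swap (w : Perm (Fin n)) (k l : Fin n) :
    invLen n (w * Equiv.swap k l) =
      (InvSet w \ RSet k l).card + (RSet k l \ InvSet w).card := by
  rw [invLen_eq]
  rw [← Finset.card_union_of_disjoint (by
    exact Finset.disjoint_left.2 (fun p hp hq => (Finset.mem_sdiff.1 hq).2 (Finset.mem_sdiff.1 hp).1))]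
  apply Finset.card_bij' (fun p _ => B k l p) (fun p _ => B k l p)
  · -- hi : maps InvSet (w * swap) into the symmetric difference
    intro p hp
    rw [mem_InvSet] at hp
    obtain ⟨h1, h2⟩ := hp
    simp only [Equiv.Perm.mul_apply] at h2
    simp only [Finset.mem_union, Finset.mem_sdiff, RSet, mem_InvSet]
    by_cases h : Equiv.swap k l p.1 < Equiv.swap k l p.2
    · left
      simp only [B, h, if_true]
      refine ⟨⟨trivial, h2⟩, ?_⟩
      intro hc
      exact absurd hc.2 (by simp [Equiv.swap_apply_self, not_lt_of_gt h1])
    · right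
      have hne : Equiv.swap k l p.1 ≠ Equiv.swap k l p.2 :=
        fun hc => h1.ne ((Equiv.swap k l).injective hc)
      have h' : Equiv.swap k l p.2 < Equiv.swap k l p.1 := lt_of_le_of_ne (not_lt.1 h) (Ne.symm hne)
      simp only [B, h, if_false]
      refine ⟨⟨h', by simp [Equiv.swap_apply_self, h1]⟩, ?_⟩
      intro hc
      exact absurd hc.2 (not_lt_of_gt h2)
  · -- hj : maps the symmetric difference into InvSet (w * swap)
    intro p hp
    rw [mem_InvSet]
    simp only [Finset.mem_union, Finset.mem_sdiff, RSet, mem_InvSet] at hp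
    rcases hp with ⟨⟨h1, h2⟩, h3⟩ | ⟨⟨h1, h2⟩, h3⟩
    · have h : Equiv.swap k l p.1 < Equiv.swap k l p.2 := by
        rcases lt_or_gt_of_ne (fun hc => h1.ne ((Equiv.swap k l).injective hc)) with h | h
        · exact h
        · exact absurd ⟨h1, h⟩ h3
      simp only [B, h, if_true]
      exact ⟨trivial, by simp [Equiv.Perm.mul_apply, Equiv.swap_apply_self, h2]⟩
    · have h : ¬ Equiv.swap k l p.1 < Equiv.swap k l p.2 := not_lt_of_gt h2
      have hw : w p.1 < w p.2 := by
        rcases lt_or_gt_of_ne (fun hc => h1.ne (w.injective hc)) with h' | h'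
        · exact h'
        · exact absurd ⟨h1, h'⟩ h3
      simp only [B, h, if_false]
      exact ⟨h2, by simp [Equiv.Perm.mul_apply, Equiv.swap_apply_self, hw]⟩
  · intro p hp
    exact B_B (mem_InvSet.1 hp).1
  · intro p hp
    rcases Finset.mem_union.1 hp with hp | hp <;>
      exact B_B (mem_InvSet.1 (Finset.mem_sdiff.1 hp).1).1

lemma invLen_add_eq (w : Perm (Fin n)) (k l : Fin n) :
    invLen n (w * Equiv.swap k l) + (InvSet w ∩ RSet k l).card =
      invLen n w + (RSet k l \ InvSet w).card := by
  rw [card_invLen_mul_swap, invLen_eq w, ← Finset.card_sdiff_add_card_inter (InvSet w) (RSet k l)]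
  ring


lemma phi_injOn {k l : Fin n} (hkl : k < l) {S : Finset (Fin n × Fin n)} (hS : S ⊆ RSet k l) :
    Set.InjOn (fun p : Fin n × Fin n => if p.1 = k then (p.2, l) else (k, p.1)) S := by
  intro p hp p' hp' hpp
  rw [Finset.mem_coe] at hp hp'
  have h1 := (memR_iff hkl).1 (hS hp)
  have h2 := (memR_iff hkl).1 (hS hp')
  simp only at hpp
  rcases h1 with ⟨e1, e2, e3⟩ | ⟨e1, e2, e3⟩ <;> rcases h2 with ⟨f1, f2, f3⟩ | ⟨f1, f2, f3⟩
  · rw [if_pos e1, if_pos f1] at hpp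
    exact Prod.ext (e1.trans f1.symm) (congrArg Prod.fst hpp)
  · rw [if_pos e1, if_neg (ne_of_gt f2)] at hpp
    exact absurd (congrArg Prod.fst hpp) (ne_of_gt e2)
  · rw [if_neg (ne_of_gt e2), if_pos f1] at hpp
    exact absurd (congrArg Prod.fst hpp).symm (ne_of_gt f2)
  · rw [if_neg (ne_of_gt e2), if_neg (ne_of_gt f2)] at hpp
    exact Prod.ext (congrArg Prod.snd hpp) (e1.trans f1.symm)

lemma inj_lt (w : Perm (Fin n)) {k l : Fin n} (hkl : k < l) (h : w l < w k) :
    (RSet k l \ InvSet w).card < (InvSet w ∩ RSet k l).card := by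
  have hmem : (k, l) ∈ InvSet w ∩ RSet k l := by
    simp only [Finset.mem_inter, mem_InvSet, memR_iff hkl]
    exact ⟨⟨hkl, h⟩, Or.inl ⟨trivial, hkl, le_refl l⟩⟩
  have hle : (RSet k l \ InvSet w).card ≤ ((InvSet w ∩ RSet k l).erase (k, l)).card := by
    apply Finset.card_le_card_of_injOn (fun p => if p.1 = k then (p.2, l) else (k, p.1))
    · intro p hp
      simp only [Finset.mem_coe, Finset.mem_sdiff, mem_InvSet, memR_iff hkl] at hp
      obtain ⟨hR, hI⟩ := hp
      simp only [Finset.mem_coe, Finset.mem_erase, Finset.mem_inter, mem_InvSet, memR_iff hkl]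
      rcases hR with ⟨e1, e2, e3⟩ | ⟨e1, e2, e3⟩
      · have hq : ¬ w p.2 < w k := fun hc => hI ⟨e1 ▸ e2, by rw [e1]; exact hc⟩
        have hqk : w k < w p.2 := by
          rcases (w.injective.ne (a₁ := k) (a₂ := p.2) (ne_of_lt e2)).lt_or_gt with h' | h'
          · exact h'
          · exact absurd h' hq
        have hql : p.2 ≠ l := by rintro rfl; exact hq h
        have hql' : p.2 < l := lt_of_le_of_ne e3 hql
        rw [if_pos e1]
        refine ⟨?_, ⟨hql', h.trans hqk⟩, Or.inr ⟨rfl, e2, hql'⟩⟩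
        intro hc
        exact (ne_of_gt e2) (congrArg Prod.fst hc)
      · have hpk : p.1 ≠ k := ne_of_gt e2
        have hplt : p.1 < p.2 := e1 ▸ e3
        have hq : ¬ w p.2 < w p.1 := fun hc => hI ⟨hplt, hc⟩
        have hq2 : w p.1 < w p.2 := by
          rcases (w.injective.ne (ne_of_lt hplt)).lt_or_gt with h' | h'
          · exact h'
          · exact absurd h' hq
        have hq3 : w p.1 < w k := by rw [e1] at hq2; exact hq2.trans h
        rw [if_neg hpk]
        refine ⟨?_, ⟨e2, hq3⟩, Or.inl ⟨rfl, e2, le_of_lt e3⟩⟩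
        intro hc
        exact (ne_of_lt e3) (congrArg Prod.snd hc)
    · exact phi_injOn hkl Finset.sdiff_subset
  have h1 := Finset.card_erase_of_mem hmem
  have h2 : 0 < (InvSet w ∩ RSet k l).card := Finset.card_pos.2 ⟨_, hmem⟩
  omega

lemma inj_gt (w : Perm (Fin n)) {k l : Fin n} (hkl : k < l) (h : w k < w l) :
    (InvSet w ∩ RSet k l).card < (RSet k l \ InvSet w).card := by
  have hmem : (k, l) ∈ RSet k l \ InvSet w := by
    simp only [Finset.mem_sdiff, mem_InvSet, memR_iff hkl]
    exact ⟨Or.inl ⟨trivial, hkl, le_refl l⟩, fun hc => absurd hc.2 (not_lt_of_gt h)⟩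
  have hle : (InvSet w ∩ RSet k l).card ≤ ((RSet k l \ InvSet w).erase (k, l)).card := by
    apply Finset.card_le_card_of_injOn (fun p => if p.1 = k then (p.2, l) else (k, p.1))
    · intro p hp
      simp only [Finset.mem_coe, Finset.mem_inter, mem_InvSet, memR_iff hkl] at hp
      obtain ⟨⟨hplt, hI⟩, hR⟩ := hp
      simp only [Finset.mem_coe, Finset.mem_erase, Finset.mem_sdiff, mem_InvSet, memR_iff hkl]
      rcases hR with ⟨e1, e2, e3⟩ | ⟨e1, e2, e3⟩
      · have hq : w p.2 < w l := by
          have : w p.2 < w k := e1 ▸ hI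
          exact this.trans h
        have hql : p.2 ≠ l := fun hc => absurd (hc ▸ hq) (lt_irrefl _)
        have hql' : p.2 < l := lt_of_le_of_ne e3 hql
        rw [if_pos e1]
        refine ⟨?_, Or.inr ⟨rfl, e2, hql'⟩, fun hc => absurd hc.2 (not_lt_of_gt hq)⟩
        intro hc
        exact (ne_of_gt e2) (congrArg Prod.fst hc)
      · have hpk : p.1 ≠ k := ne_of_gt e2
        have hq : w k < w p.1 := h.trans (e1 ▸ hI)
        rw [if_neg hpk]
        refine ⟨?_, Or.inl ⟨rfl, e2, le_of_lt e3⟩, fun hc => absurd hc.2 (not_lt_of_gt hq)⟩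
        intro hc
        exact (ne_of_lt e3) (congrArg Prod.snd hc)
    · exact phi_injOn hkl Finset.inter_subset_right
  have h1 := Finset.card_erase_of_mem hmem
  have h2 : 0 < (RSet k l \ InvSet w).card := Finset.card_pos.2 ⟨_, hmem⟩
  omega

lemma invLen_mul_swap_lt_iff (w : Perm (Fin n)) {k l : Fin n} (hkl : k < l) :
    invLen n (w * Equiv.swap k l) < invLen n w ↔ w l < w k := by
  have hE := invLen_add_eq w k l
  constructor
  · intro hlt
    by_contra hc
    have hne : w k ≠ w l := w.injective.ne (ne_of_lt hkl)
    have h' : w k < w l := lt_of_le_of_ne (not_lt.1 hc) hne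
    have := inj_gt w hkl h'
    omega
  · intro h
    have := inj_lt w hkl h
    omega


lemma swap_mul_mul_swap {w : Perm (Fin n)} {k l i i1 : Fin n} (hkl : k ≠ l)
    (h1 : w k = i) (h2 : w l = i1) : Equiv.swap i i1 * w * Equiv.swap k l = w := by
  apply Equiv.ext
  intro x
  simp only [Equiv.Perm.mul_apply]
  by_cases hx : x = k
  · subst hx
    rw [Equiv.swap_apply_left, h2, Equiv.swap_apply_right, h1]
  · by_cases hx' : x = l
    · subst hx'
      rw [Equiv.swap_apply_right, h1, Equiv.swap_apply_left, h2]
    · rw [Equiv.swap_apply_of_ne_of_ne hx hx']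
      exact Equiv.swap_apply_of_ne_of_ne (h1 ▸ w.injective.ne hx) (h2 ▸ w.injective.ne hx')

lemma swap_adj_lt {i i1 : Fin n} (h : (i1 : ℕ) = (i : ℕ) + 1) (x y : Fin n)
    (h1 : ¬(x = i ∧ y = i1)) (h2 : ¬(x = i1 ∧ y = i)) :
    (Equiv.swap i i1 x < Equiv.swap i i1 y ↔ x < y) := by
  simp only [Equiv.swap_apply_def]
  split_ifs <;>
    (simp only [Fin.lt_def, Fin.ext_iff, not_and] at * ; try omega)

end SDAux


/-- The simple reflection `s_i` of `Fin n`, swapping `i` and `i + 1` (0-indexed). -/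
def simpleRefl (n : ℕ) (i : ℕ) (h : i + 1 < n) : Equiv.Perm (Fin n) :=
  Equiv.swap ⟨i, Nat.lt_of_succ_lt h⟩ ⟨i + 1, h⟩

/-- The word `(s_{i_1}, …, s_{i_m})` of simple reflections attached to a list of letters
`a : Fin m → ℕ` (0-indexed, with `a j + 1 < n`). -/
def word (n m : ℕ) (a : Fin m → ℕ) (ha : ∀ j, a j + 1 < n) : List (Equiv.Perm (Fin n)) :=
  List.ofFn fun j => simpleRefl n (a j) (ha j)

/-- The suffix product `t_j = s_{i_{j+1}} ⋯ s_{i_m}` (so the last `t` is the identity). -/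
def suffixProd (n m : ℕ) (a : Fin m → ℕ) (ha : ∀ j, a j + 1 < n) (j : Fin m) :
    Equiv.Perm (Fin n) :=
  ((word n m a ha).drop ((j : ℕ) + 1)).prod

/-- The sign `δ_j ∈ {-1, 0, 1}`: it is `1` if `(t_j(k), t_j(l)) = (i_j, i_j + 1)`,
`-1` if `(t_j(k), t_j(l)) = (i_j + 1, i_j)`, and `0` otherwise. -/
def delta (n m : ℕ) (a : Fin m → ℕ) (ha : ∀ j, a j + 1 < n) (k l : Fin n) (j : Fin m) : ℤ :=
  if (suffixProd n m a ha j k : ℕ) = a j ∧ (suffixProd n m a ha j l : ℕ) = a j + 1 then 1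
  else if (suffixProd n m a ha j k : ℕ) = a j + 1 ∧ (suffixProd n m a ha j l : ℕ) = a j then -1
  else 0

namespace SDAux

lemma word_succ (n m : ℕ) (a : Fin (m+1) → ℕ) (ha : ∀ j, a j + 1 < n) :
    word n (m+1) a ha =
      simpleRefl n (a 0) (ha 0) :: word n m (fun j => a j.succ) (fun j => ha j.succ) := by
  simp [word, List.ofFn_succ]

lemma suffixProd_succ (n m : ℕ) (a : Fin (m+1) → ℕ) (ha : ∀ j, a j + 1 < n) (j : Fin m) :
    suffixProd n (m+1) a ha j.succ = suffixProd n m (fun j => a j.succ) (fun j => ha j.succ) j := by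
  simp [suffixProd, word_succ, Fin.val_succ, List.drop_succ_cons]

lemma suffixProd_zero (n m : ℕ) (a : Fin (m+1) → ℕ) (ha : ∀ j, a j + 1 < n) :
    suffixProd n (m+1) a ha 0 = (word n m (fun j => a j.succ) (fun j => ha j.succ)).prod := by
  simp [suffixProd, word_succ]

lemma delta_succ (n m : ℕ) (a : Fin (m+1) → ℕ) (ha : ∀ j, a j + 1 < n) (k l : Fin n) (j : Fin m) :
    delta n (m+1) a ha k l j.succ = delta n m (fun j => a j.succ) (fun j => ha j.succ) k l j := by
  simp only [delta, suffixProd_succ]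

end SDAux

/-- In the group ring `ℤ[S_n]`, the signed sum of the products of the word with its `j`-th
letter omitted equals `w·t_{kl}` if `ℓ(w·t_{kl}) < ℓ(w)`, and `0` otherwise. -/
theorem sum_delta_eraseIdx_eq (n : ℕ) (hn : 2 ≤ n) (m : ℕ) (a : Fin m → ℕ)
    (ha : ∀ j, a j + 1 < n) (k l : Fin n) (hkl : k < l) :
    (∑ j : Fin m,
        MonoidAlgebra.single (((word n m a ha).eraseIdx (j : ℕ)).prod)
          (delta n m a ha k l j)) =
      if invLen n ((word n m a ha).prod * Equiv.swap k l) < invLen n ((word n m a ha).prod)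
        then MonoidAlgebra.single ((word n m a ha).prod * Equiv.swap k l) (1 : ℤ)
        else 0 := by
  induction m with
  | zero =>
    have hw : word n 0 a ha = [] := by simp [word]
    rw [hw]
    simp only [List.prod_nil, one_mul, Finset.univ_eq_empty, Finset.sum_empty]
    rw [if_neg]
    rw [show ((Equiv.swap k l : Equiv.Perm (Fin n)) = 1 * Equiv.swap k l) by rw [one_mul]]
    rw [SDAux.invLen_mul_swap_lt_iff 1 hkl]
    simp only [Equiv.Perm.one_apply]
    exact not_lt_of_gt hkl
  | succ m IH =>
    have hword := SDAux.word_succ n m a ha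
    set s : Equiv.Perm (Fin n) := simpleRefl n (a 0) (ha 0) with hs
    set L : List (Equiv.Perm (Fin n)) := word n m (fun j => a j.succ) (fun j => ha j.succ) with hL
    set w' : Equiv.Perm (Fin n) := L.prod with hw'
    have hprod : (word n (m+1) a ha).prod = s * w' := by rw [hword, List.prod_cons]
    rw [Fin.sum_univ_succ]
    have h0 : ((word n (m+1) a ha).eraseIdx ((0 : Fin (m+1)) : ℕ)).prod = w' := by
      rw [hword]; rfl
    have hsucc : ∀ j : Fin m,
        MonoidAlgebra.single (((word n (m+1) a ha).eraseIdx ((j.succ : Fin (m+1)) : ℕ)).prod)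
          (delta n (m+1) a ha k l j.succ)
        = (MonoidAlgebra.single s 1 : MonoidAlgebra ℤ (Equiv.Perm (Fin n))) *
            MonoidAlgebra.single ((L.eraseIdx (j : ℕ)).prod)
              (delta n m (fun j => a j.succ) (fun j => ha j.succ) k l j) := by
      intro j
      rw [hword, Fin.val_succ, List.eraseIdx_cons_succ, List.prod_cons,
        SDAux.delta_succ, MonoidAlgebra.single_mul_single, one_mul]
    simp only [hsucc]
    rw [← Finset.mul_sum, IH (fun j => a j.succ) (fun j => ha j.succ), h0, hprod]
    -- now the case analysis
    have hδ0 : delta n (m+1) a ha k l 0 =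
        if (w' k : ℕ) = a 0 ∧ (w' l : ℕ) = a 0 + 1 then 1
        else if (w' k : ℕ) = a 0 + 1 ∧ (w' l : ℕ) = a 0 then -1 else 0 := by
      simp only [delta, SDAux.suffixProd_zero, ← hL, ← hw']
    set i : Fin n := ⟨a 0, Nat.lt_of_succ_lt (ha 0)⟩ with hi
    set i1 : Fin n := ⟨a 0 + 1, ha 0⟩ with hi1
    have hsswap : s = Equiv.swap i i1 := rfl
    have hC' := SDAux.invLen_mul_swap_lt_iff w' hkl
    have hC := SDAux.invLen_mul_swap_lt_iff (s * w') hkl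
    have hklne : k ≠ l := ne_of_lt hkl
    by_cases hA : (w' k : ℕ) = a 0 ∧ (w' l : ℕ) = a 0 + 1
    · -- δ0 = 1, C' false, C true, s*w'*t = w'
      have hk : w' k = i := Fin.ext hA.1
      have hl : w' l = i1 := Fin.ext hA.2
      have hconj : s * w' * Equiv.swap k l = w' := by
        rw [hsswap]; exact SDAux.swap_mul_mul_swap hklne hk hl
      have hC'false : ¬ invLen n (w' * Equiv.swap k l) < invLen n w' := by
        rw [hC', hk, hl]
        exact fun h => absurd (Fin.lt_def.1 h) (show ¬ a 0 + 1 < a 0 by omega)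
      have hCtrue : invLen n (s * w' * Equiv.swap k l) < invLen n (s * w') := by
        rw [hC]
        simp only [Equiv.Perm.mul_apply, hk, hl, hsswap,
          Equiv.swap_apply_left, Equiv.swap_apply_right]
        exact Fin.lt_def.2 (show a 0 < a 0 + 1 by omega)
      rw [if_neg hC'false, if_pos hCtrue, hδ0, if_pos hA, hconj]
      simp
    · by_cases hB : (w' k : ℕ) = a 0 + 1 ∧ (w' l : ℕ) = a 0
      · -- δ0 = -1, C' true, C false, s*w'*t = w'
        have hk : w' k = i1 := Fin.ext hB.1
        have hl : w' l = i := Fin.ext hB.2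
        have hconj : s * w' * Equiv.swap k l = w' := by
          rw [hsswap, Equiv.swap_comm]
          exact SDAux.swap_mul_mul_swap hklne hk hl
        have hC'true : invLen n (w' * Equiv.swap k l) < invLen n w' := by
          rw [hC', hk, hl]
          exact Fin.lt_def.2 (show a 0 < a 0 + 1 by omega)
        have hCfalse : ¬ invLen n (s * w' * Equiv.swap k l) < invLen n (s * w') := by
          rw [hC]
          simp only [Equiv.Perm.mul_apply, hk, hl, hsswap,
            Equiv.swap_apply_left, Equiv.swap_apply_right]
          exact fun h => absurd (Fin.lt_def.1 h) (show ¬ a 0 + 1 < a 0 by omega)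
        rw [if_pos hC'true, if_neg hCfalse, hδ0, if_neg hA, if_pos hB,
          MonoidAlgebra.single_mul_single, one_mul, ← mul_assoc, hconj]
        rw [← MonoidAlgebra.single_add]
        simp
      · -- δ0 = 0, C ↔ C'
        have hne1 : ¬(w' l = i ∧ w' k = i1) := by
          rintro ⟨h1, h2⟩
          exact hB ⟨by rw [h2], by rw [h1]⟩
        have hne2 : ¬(w' l = i1 ∧ w' k = i) := by
          rintro ⟨h1, h2⟩
          exact hA ⟨by rw [h2], by rw [h1]⟩
        have hCC : (invLen n (s * w' * Equiv.swap k l) < invLen n (s * w')) ↔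
            (invLen n (w' * Equiv.swap k l) < invLen n w') := by
          rw [hC, hC']
          simp only [Equiv.Perm.mul_apply, hsswap]
          exact SDAux.swap_adj_lt rfl (w' l) (w' k) hne1 hne2
        rw [hδ0, if_neg hA, if_neg hB]
        by_cases hC'h : invLen n (w' * Equiv.swap k l) < invLen n w'
        · rw [if_pos hC'h, if_pos (hCC.2 hC'h), MonoidAlgebra.single_mul_single, one_mul,
            ← mul_assoc]
          simp
          rfl
        · rw [if_neg hC'h, if_neg (fun hc => hC'h (hCC.1 hc))]
          simp
end
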